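/- Suppose 0 < z ≤ g and q ≥ 1. Then φ_A is strictly increasing and φ_B is strictly decreasing on [Σ_z, ∞), with φ_A(Σ_z) = φ_B(Σ_z) = 0, φ_A mapping [Σ_z, ∞) bijectively onto [0, ∞) and φ_B mapping [Σ_z, ∞) bijectively onto (−∞, 0]. Consequently, the function Σ = Σ(φ), defined for φ ∈ ℝ by Σ(φ) = φ_A^{−1}(φ) for φ ≥ 0 and Σ(φ) = φ_B^{−1}(φ) for φ ≤ 0, is a well-defined single-valued function with range [Σ_z, ∞) and Σ(0) = Σ_z, and the function D(φ) := √(Σ(φ)² − 4e^{−(g+z)Σ(φ)}) for φ ≥ 0, D(φ) := −√(Σ(φ)² − 4e^{−(g+z)Σ(φ)}) for φ ≤ 0 (i.e., c₁ − c₂ as a function of φ) is strictly monotone increasing on ℝ, with derivative d/dφ (c₁ − c₂) = q·(Σ e^{(g+z)Σ} + 2(g+z)) / ((1 + gΣ) e^{(g+z)Σ} + g² − z²) > 0, and D(φ) → ±∞ as φ → ±∞. -/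

import Mathlib

open Set Filter

/-- The critical total concentration Σ_z: the unique positive solution of
Σ = 2·e^{−(g+z)Σ/2} (equivalently Σ² = 4·e^{−(g+z)Σ}). -/
noncomputable def sigmaZ (g z : ℝ) : ℝ :=
  sInf {S : ℝ | 0 < S ∧ S = 2 * Real.exp (-((g + z) * S) / 2)}

/-- The potential φ_A along branch A of the two-species system. -/
noncomputable def phiA (g z q S : ℝ) : ℝ :=
  (Real.log ((S + Real.sqrt (S ^ 2 - 4 * Real.exp (-((g + z) * S)))) / 2)
    + (g + z) / 2 * S
    + (g - z) / 2 * Real.sqrt (S ^ 2 - 4 * Real.exp (-((g + z) * S)))) / q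

/-- The potential φ_B along branch B of the two-species system. -/
noncomputable def phiB (g z q S : ℝ) : ℝ :=
  (Real.log ((S - Real.sqrt (S ^ 2 - 4 * Real.exp (-((g + z) * S)))) / 2)
    + (g + z) / 2 * S
    + (z - g) / 2 * Real.sqrt (S ^ 2 - 4 * Real.exp (-((g + z) * S)))) / q

namespace Stmt4Aux

/-- G -/
noncomputable def Ga (g z S : ℝ) : ℝ := S - 2 * Real.exp (-((g + z) * S) / 2)

lemma Ga_strictMono (g z : ℝ) (ha : 0 < g + z) : StrictMono (Ga g z) := by
  have h1 : StrictMono fun S : ℝ => -(2 * Real.exp (-((g + z) * S) / 2)) := by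
    have : StrictAnti fun S : ℝ => 2 * Real.exp (-((g + z) * S) / 2) := by
      have : StrictAnti fun S : ℝ => -((g + z) * S) / 2 := by
        intro x y hxy
        simp only
        nlinarith
      exact fun x y hxy => by
        have := Real.exp_lt_exp.2 (this hxy)
        simp only; nlinarith
    exact fun x y hxy => neg_lt_neg (this hxy)
  have := (strictMono_id (α := ℝ)).add h1
  convert this using 1
  funext x
  simp [Ga, sub_eq_add_neg]

lemma sigma_spec (g z : ℝ) (ha : 0 < g + z) :
    0 < sigmaZ g z ∧ sigmaZ g z = 2 * Real.exp (-((g + z) * sigmaZ g z) / 2) := by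
  have hG := Ga_strictMono g z ha
  have hcont : Continuous (Ga g z) := by
    unfold Ga; fun_prop
  have h0 : Ga g z 0 = -2 := by simp [Ga]
  have h3 : 0 ≤ Ga g z 3 := by
    have : Real.exp (-((g + z) * 3) / 2) ≤ 1 := Real.exp_le_one_iff.2 (by nlinarith)
    simp only [Ga]; nlinarith
  obtain ⟨σ, hσmem, hσ⟩ : ∃ σ ∈ Icc (0:ℝ) 3, Ga g z σ = 0 := by
    have := intermediate_value_Icc (by norm_num : (0:ℝ) ≤ 3) hcont.continuousOn
    exact this ⟨by rw [h0]; norm_num, h3⟩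
  have hσpos : 0 < σ := by
    by_contra h
    push_neg at h
    have := hG.monotone h
    rw [hσ, h0] at this; linarith
  have hset : {S : ℝ | 0 < S ∧ S = 2 * Real.exp (-((g + z) * S) / 2)} = {σ} := by
    ext x
    simp only [mem_setOf_eq, mem_singleton_iff]
    constructor
    · rintro ⟨hx, hxe⟩
      exact hG.injective (by rw [hσ]; simp [Ga]; linarith)
    · rintro rfl
      refine ⟨hσpos, ?_⟩
      have := hσ; simp only [Ga] at this; linarith
  rw [sigmaZ, hset, csInf_singleton]
  refine ⟨hσpos, ?_⟩
  have := hσ; simp only [Ga] at this; linarith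



noncomputable def Fa (g z S : ℝ) : ℝ := S ^ 2 - 4 * Real.exp (-((g + z) * S))
noncomputable def Ft (g z S : ℝ) : ℝ := if 0 ≤ S then Fa g z S else S - 4

lemma Fa_strictMonoOn (g z : ℝ) (ha : 0 < g + z) : StrictMonoOn (Fa g z) (Ici 0) := by
  intro x hx y hy hxy
  simp only [Fa]
  have h1 : x ^ 2 < y ^ 2 := by nlinarith [mem_Ici.1 hx]
  have h2 : Real.exp (-((g + z) * y)) < Real.exp (-((g + z) * x)) :=
    Real.exp_lt_exp.2 (by nlinarith)
  nlinarith

lemma Ft_strictMono (g z : ℝ) (ha : 0 < g + z) : StrictMono (Ft g z) := by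
  intro x y hxy
  have hmono := Fa_strictMonoOn g z ha
  simp only [Ft]
  rcases le_or_gt 0 x with hx | hx
  · rw [if_pos hx, if_pos (le_of_lt (lt_of_le_of_lt hx hxy))]
    exact hmono hx (le_of_lt (lt_of_le_of_lt hx hxy)) hxy
  · rw [if_neg (not_le.2 hx)]
    rcases le_or_gt 0 y with hy | hy
    · rw [if_pos hy]
      have : Fa g z 0 ≤ Fa g z y := (hmono.monotoneOn) (mem_Ici.2 le_rfl) hy hy
      have h0 : Fa g z 0 = -4 := by simp [Fa]
      linarith
    · rw [if_neg (not_le.2 hy)]; linarith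

lemma Ft_continuous (g z : ℝ) : Continuous (Ft g z) := by
  have h : ∀ S : ℝ, S = 0 → Fa g z S = S - 4 := by
    rintro S rfl; simp [Fa]
  exact Continuous.if_le (by unfold Fa; fun_prop) (by fun_prop) continuous_const
    continuous_id (by intro x hx; exact h x hx.symm)

lemma Ft_surjective (g z : ℝ) (ha : 0 < g + z) : Function.Surjective (Ft g z) := by
  apply (Ft_continuous g z).surjective
  · apply tendsto_atTop_mono (f := fun S : ℝ => S - 5)
    · intro S
      simp only [Ft]
      rcases le_or_gt 0 S with hS | hS
      · rw [if_pos hS]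
        have h1 : Real.exp (-((g + z) * S)) ≤ 1 := Real.exp_le_one_iff.2 (by nlinarith)
        simp only [Fa]
        nlinarith
      · rw [if_neg (not_le.2 hS)]; linarith
    · exact tendsto_atTop_add_const_right _ _ tendsto_id
  · have : ∀ᶠ S : ℝ in atBot, Ft g z S = S - 4 := by
      filter_upwards [eventually_lt_atBot (0:ℝ)] with S hS
      simp [Ft, not_le.2 hS]
    exact Tendsto.congr' (by filter_upwards [this] with S h using h.symm) (tendsto_atBot_add_const_right _ _ tendsto_id)

/-- order iso of Ft -/
noncomputable def psi (g z : ℝ) (ha : 0 < g + z) : ℝ ≃o ℝ :=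
  StrictMono.orderIsoOfSurjective (Ft g z) (Ft_strictMono g z ha) (Ft_surjective g z ha)

lemma psi_apply (g z : ℝ) (ha : 0 < g + z) (S : ℝ) : psi g z ha S = Ft g z S := rfl

noncomputable def Sfun (g z : ℝ) (ha : 0 < g + z) (D : ℝ) : ℝ := (psi g z ha).symm (D ^ 2)




section SfunLemmas

variable {g z : ℝ}

lemma Fa_sigma (g z : ℝ) (ha : 0 < g + z) : Fa g z (sigmaZ g z) = 0 := by
  obtain ⟨hpos, heq⟩ := sigma_spec g z ha
  have h2 : Real.exp (-((g + z) * sigmaZ g z) / 2) * Real.exp (-((g + z) * sigmaZ g z) / 2)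
      = Real.exp (-((g + z) * sigmaZ g z)) := by
    rw [← Real.exp_add]; ring_nf
  simp only [Fa]
  nlinarith

lemma psi_sigma (g z : ℝ) (ha : 0 < g + z) : psi g z ha (sigmaZ g z) = 0 := by
  obtain ⟨hpos, _⟩ := sigma_spec g z ha
  rw [psi_apply, Ft, if_pos hpos.le, Fa_sigma g z ha]

lemma Sfun_ge (g z : ℝ) (ha : 0 < g + z) (D : ℝ) : sigmaZ g z ≤ Sfun g z ha D := by
  have h0 : (psi g z ha).symm 0 = sigmaZ g z := by
    rw [← psi_sigma g z ha, OrderIso.symm_apply_apply]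
  rw [← h0, Sfun]
  exact (psi g z ha).symm.monotone (sq_nonneg D)

lemma Sfun_pos (g z : ℝ) (ha : 0 < g + z) (D : ℝ) : 0 < Sfun g z ha D :=
  lt_of_lt_of_le (sigma_spec g z ha).1 (Sfun_ge g z ha D)

lemma Fa_Sfun (g z : ℝ) (ha : 0 < g + z) (D : ℝ) : Fa g z (Sfun g z ha D) = D ^ 2 := by
  have h := (psi g z ha).apply_symm_apply (D ^ 2)
  have hpos := (Sfun_pos g z ha D).le
  simp only [psi_apply, Ft, Sfun] at h hpos ⊢
  rw [if_pos hpos] at h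
  exact h

lemma Sfun_exp (g z : ℝ) (ha : 0 < g + z) (D : ℝ) :
    4 * Real.exp (-((g + z) * Sfun g z ha D)) = (Sfun g z ha D) ^ 2 - D ^ 2 := by
  have := Fa_Sfun g z ha D
  simp only [Fa] at this
  linarith

lemma abs_lt_Sfun (g z : ℝ) (ha : 0 < g + z) (D : ℝ) : |D| < Sfun g z ha D := by
  have h := Sfun_exp g z ha D
  have he : 0 < Real.exp (-((g + z) * Sfun g z ha D)) := Real.exp_pos _
  have : D ^ 2 < (Sfun g z ha D) ^ 2 := by nlinarith
  have habs : |D| < |Sfun g z ha D| := by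
    rw [← Real.sqrt_sq_eq_abs, ← Real.sqrt_sq_eq_abs]
    exact Real.sqrt_lt_sqrt (sq_nonneg _) this
  rwa [abs_of_pos (Sfun_pos g z ha D)] at habs

lemma Sfun_add_pos (g z : ℝ) (ha : 0 < g + z) (D : ℝ) : 0 < Sfun g z ha D + D := by
  have := abs_lt_Sfun g z ha D
  have := neg_abs_le D
  linarith

lemma Sfun_sub_pos (g z : ℝ) (ha : 0 < g + z) (D : ℝ) : 0 < Sfun g z ha D - D := by
  have := abs_lt_Sfun g z ha D
  have := le_abs_self D
  linarith

lemma Sfun_zero (g z : ℝ) (ha : 0 < g + z) : Sfun g z ha 0 = sigmaZ g z := by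
  have : Sfun g z ha 0 = (psi g z ha).symm ((0:ℝ) ^ 2) := rfl
  rw [this]
  norm_num
  rw [← psi_sigma g z ha, OrderIso.symm_apply_apply]

lemma Sfun_of_Fa (g z : ℝ) (ha : 0 < g + z) {S : ℝ} (hS : sigmaZ g z ≤ S) {D : ℝ} (hD : Fa g z S = D ^ 2) :
    Sfun g z ha D = S := by
  have hSpos : 0 < S := lt_of_lt_of_le (sigma_spec g z ha).1 hS
  have : psi g z ha S = D ^ 2 := by rw [psi_apply, Ft, if_pos hSpos.le, hD]
  rw [Sfun, ← this, OrderIso.symm_apply_apply]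

lemma hasDerivAt_Fa (g z : ℝ) (S : ℝ) :
    HasDerivAt (Fa g z) (2 * S + 4 * (g + z) * Real.exp (-((g + z) * S))) S := by
  have h1 : HasDerivAt (fun S : ℝ => S ^ 2) (2 * S) S := by
    simpa using hasDerivAt_pow 2 S
  have h2 : HasDerivAt (fun S : ℝ => 4 * Real.exp (-((g + z) * S)))
      (4 * (Real.exp (-((g + z) * S)) * (-(g + z)))) S := by
    have hinner : HasDerivAt (fun S : ℝ => -((g + z) * S)) (-(g + z)) S := by
      simpa using ((hasDerivAt_id S).const_mul (g + z)).fun_neg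
    exact (hinner.exp).const_mul 4
  have := h1.sub h2
  exact this.congr_deriv (by ring)

lemma Fa_deriv_pos (g z : ℝ) (ha : 0 < g + z) (S : ℝ) (hS : 0 < S) :
    0 < 2 * S + 4 * (g + z) * Real.exp (-((g + z) * S)) := by
  have := Real.exp_pos (-((g + z) * S))
  nlinarith

lemma hasDerivAt_Sfun (g z : ℝ) (ha : 0 < g + z) (D : ℝ) :
    HasDerivAt (Sfun g z ha)
      ((2 * Sfun g z ha D + 4 * (g + z) * Real.exp (-((g + z) * Sfun g z ha D)))⁻¹ * (2 * D))
      D := by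
  set S₀ := Sfun g z ha D with hS₀
  have hS₀pos : 0 < S₀ := Sfun_pos g z ha D
  have hFt : HasDerivAt (Ft g z)
      (2 * S₀ + 4 * (g + z) * Real.exp (-((g + z) * S₀))) S₀ := by
    apply (hasDerivAt_Fa g z S₀).congr_of_eventuallyEq
    filter_upwards [eventually_gt_nhds hS₀pos] with x hx
    simp [Ft, if_pos hx.le]
  have hcont : ContinuousAt (⇑(psi g z ha).symm) (D ^ 2) :=
    ((psi g z ha).symm.toHomeomorph).continuous.continuousAt
  have hinv : HasDerivAt (⇑(psi g z ha).symm)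
      (2 * S₀ + 4 * (g + z) * Real.exp (-((g + z) * S₀)))⁻¹ (D ^ 2) := by
    apply HasDerivAt.of_local_left_inverse hcont _ (ne_of_gt (Fa_deriv_pos g z ha S₀ hS₀pos))
    · filter_upwards with y
      exact (psi g z ha).apply_symm_apply y
    · exact hFt
  have hsq : HasDerivAt (fun D : ℝ => D ^ 2) (2 * D) D := by
    simpa using hasDerivAt_pow 2 D
  exact HasDerivAt.comp D hinv hsq

end SfunLemmas



lemma deriv_algebra (g z q S D u : ℝ) (hu : 4 * u = S ^ 2 - D ^ 2) (hSD : 0 < S + D)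
    (hq : 0 < q) (hden : 0 < S + 2 * (g + z) * u) :
    (((2 * S + 4 * (g + z) * u)⁻¹ * (2 * D) + 1) / 2 / ((S + D) / 2)
      + (g + z) / 2 * ((2 * S + 4 * (g + z) * u)⁻¹ * (2 * D)) + (g - z) / 2) / q
    = (1 + g * S + (g ^ 2 - z ^ 2) * u) / (q * (S + 2 * (g + z) * u)) := by
  have hM := hden
  have h2 := hSD
  have hS'eq : (2 * S + 4 * (g + z) * u)⁻¹ * (2 * D) = D / (S + 2 * (g + z) * u) := by
    have hA : 2 * S + 4 * (g + z) * u = 2 * (S + 2 * (g + z) * u) := by ring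
    rw [hA]
    field_simp
  have hDM : D + (S + 2 * (g + z) * u)
      = (S + D) * ((1 + g * S + (g ^ 2 - z ^ 2) * u)
        - (g + z) / 2 * D - (g - z) / 2 * (S + 2 * (g + z) * u)) := by
    linear_combination ((g + z) / 2) * hu
  have expand : (D / (S + 2 * (g + z) * u) + 1) / 2 / ((S + D) / 2)
      = (D + (S + 2 * (g + z) * u)) / ((S + 2 * (g + z) * u) * (S + D)) := by
    field_simp
  have main : (D / (S + 2 * (g + z) * u) + 1) / 2 / ((S + D) / 2)
      + (g + z) / 2 * (D / (S + 2 * (g + z) * u)) + (g - z) / 2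
      = (1 + g * S + (g ^ 2 - z ^ 2) * u) / (S + 2 * (g + z) * u) := by
    rw [expand, hDM, mul_comm (S + 2 * (g + z) * u) (S + D), mul_div_mul_left _ _ hSD.ne',
      eq_div_iff hden.ne', add_mul, add_mul, div_mul_cancel₀ _ hden.ne', mul_div_assoc',
      div_mul_cancel₀ _ hden.ne']
    ring
  rw [hS'eq, main, div_div]
  ring_nf

/-- the glued potential as a function of the difference D = c₁ - c₂ -/
noncomputable def Phi (g z q : ℝ) (ha : 0 < g + z) (D : ℝ) : ℝ :=
  (Real.log ((Sfun g z ha D + D) / 2) + (g + z) / 2 * Sfun g z ha D + (g - z) / 2 * D) / q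

/-- derivative of Phi -/
noncomputable def Pder (g z q : ℝ) (ha : 0 < g + z) (D : ℝ) : ℝ :=
  (1 + g * Sfun g z ha D + (g ^ 2 - z ^ 2) * Real.exp (-((g + z) * Sfun g z ha D)))
    / (q * (Sfun g z ha D + 2 * (g + z) * Real.exp (-((g + z) * Sfun g z ha D))))

lemma M_pos (g z : ℝ) (ha : 0 < g + z) (D : ℝ) :
    0 < Sfun g z ha D + 2 * (g + z) * Real.exp (-((g + z) * Sfun g z ha D)) := by
  have := Sfun_pos g z ha D
  have := Real.exp_pos (-((g + z) * Sfun g z ha D))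
  nlinarith

lemma hasDerivAt_Phi (g z q : ℝ) (ha : 0 < g + z) (hq : 0 < q) (D : ℝ) :
    HasDerivAt (Phi g z q ha) (Pder g z q ha D) D := by
  set S₀ := Sfun g z ha D with hS₀def
  set u := Real.exp (-((g + z) * S₀)) with hudef
  set S' := (2 * S₀ + 4 * (g + z) * u)⁻¹ * (2 * D) with hS'def
  have hS : HasDerivAt (Sfun g z ha) S' D := hasDerivAt_Sfun g z ha D
  have hadd : 0 < S₀ + D := Sfun_add_pos g z ha D
  have h1 : HasDerivAt (fun D => (Sfun g z ha D + D) / 2) ((S' + 1) / 2) D :=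
    (hS.add (hasDerivAt_id D)).div_const 2
  have hlog : HasDerivAt (fun D => Real.log ((Sfun g z ha D + D) / 2))
      (((S' + 1) / 2) / ((S₀ + D) / 2)) D :=
    h1.log (by positivity)
  have h2 : HasDerivAt (fun D => (g + z) / 2 * Sfun g z ha D) ((g + z) / 2 * S') D :=
    hS.const_mul ((g + z) / 2)
  have h3 : HasDerivAt (fun D : ℝ => (g - z) / 2 * D) ((g - z) / 2) D := by
    simpa using (hasDerivAt_id D).const_mul ((g - z) / 2)
  have hsum := ((hlog.add h2).add h3).div_const q
  refine hsum.congr_deriv ?_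
  rw [Pder, hS'def]
  exact (deriv_algebra g z q S₀ D u (Sfun_exp g z ha D) hadd hq (M_pos g z ha D))

lemma Pder_pos (g z q : ℝ) (ha : 0 < g + z) (hg : 0 < g) (hzg : z ^ 2 ≤ g ^ 2) (hq : 0 < q)
    (D : ℝ) : 0 < Pder g z q ha D := by
  have hS := Sfun_pos g z ha D
  have hu := Real.exp_pos (-((g + z) * Sfun g z ha D))
  apply div_pos
  · nlinarith
  · exact mul_pos hq (M_pos g z ha D)

lemma Pder_inv (g z q : ℝ) (ha : 0 < g + z) (hg : 0 < g) (hzg : z ^ 2 ≤ g ^ 2) (hq : 0 < q)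
    (D : ℝ) :
    (Pder g z q ha D)⁻¹
      = q * (Sfun g z ha D * Real.exp ((g + z) * Sfun g z ha D) + 2 * (g + z)) /
          ((1 + g * Sfun g z ha D) * Real.exp ((g + z) * Sfun g z ha D) + g ^ 2 - z ^ 2) := by
  set S := Sfun g z ha D with hSdef
  have hS := Sfun_pos g z ha D
  have hE : 0 < Real.exp ((g + z) * S) := Real.exp_pos _
  have hu : Real.exp (-((g + z) * S)) = (Real.exp ((g + z) * S))⁻¹ := Real.exp_neg _
  have hN : 0 < 1 + g * S + (g ^ 2 - z ^ 2) * Real.exp (-((g + z) * S)) := by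
    have := Real.exp_pos (-((g + z) * S))
    nlinarith
  have hDen : 0 < (1 + g * S) * Real.exp ((g + z) * S) + g ^ 2 - z ^ 2 := by
    nlinarith [mul_pos (show (0:ℝ) < 1 + g * S by nlinarith) hE]
  rw [Pder, inv_div, div_eq_div_iff hN.ne' hDen.ne']
  rw [hu]
  field_simp
  ring

lemma Phi_zero (g z q : ℝ) (ha : 0 < g + z) : Phi g z q ha 0 = 0 := by
  obtain ⟨hpos, heq⟩ := sigma_spec g z ha
  rw [Phi, Sfun_zero g z ha]
  have h2 : (sigmaZ g z + 0) / 2 = Real.exp (-((g + z) * sigmaZ g z) / 2) := by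
    rw [add_zero]; linarith
  rw [h2, Real.log_exp]
  ring

lemma Phi_strictMono (g z q : ℝ) (ha : 0 < g + z) (hg : 0 < g) (hz : 0 < z) (hzg : z ≤ g)
    (hq : 0 < q) : StrictMono (Phi g z q ha) :=
  strictMono_of_deriv_pos fun x => by
    rw [(hasDerivAt_Phi g z q ha hq x).deriv]
    exact Pder_pos g z q ha hg (by nlinarith) hq x

lemma Phi_continuous (g z q : ℝ) (ha : 0 < g + z) (hq : 0 < q) :
    Continuous (Phi g z q ha) :=
  continuous_iff_continuousAt.2 fun x => (hasDerivAt_Phi g z q ha hq x).continuousAt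

lemma Phi_tendsto_atTop (g z q : ℝ) (ha : 0 < g + z) (hg : 0 < g) (hz : 0 < z) (hzg : z ≤ g)
    (hq : 0 < q) : Tendsto (Phi g z q ha) atTop atTop := by
  apply tendsto_atTop_mono' atTop ?_ ((Real.tendsto_log_atTop).atTop_div_const hq)
  filter_upwards [eventually_gt_atTop (0 : ℝ)] with D hD
  rw [Phi]
  apply (div_le_div_iff_of_pos_right hq).2
  have hSD : D < Sfun g z ha D := by
    have := abs_lt_Sfun g z ha D
    have := le_abs_self D
    linarith
  have hlog : Real.log D ≤ Real.log ((Sfun g z ha D + D) / 2) :=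
    Real.log_le_log hD (by linarith)
  have h1 : 0 ≤ (g + z) / 2 * Sfun g z ha D := by
    have := Sfun_pos g z ha D
    positivity
  have h2 : 0 ≤ (g - z) / 2 * D := by
    have : 0 ≤ g - z := by linarith
    positivity
  linarith

lemma Phi_tendsto_atBot (g z q : ℝ) (ha : 0 < g + z) (hg : 0 < g) (hz : 0 < z) (hzg : z ≤ g)
    (hq : 0 < q) : Tendsto (Phi g z q ha) atBot atBot := by
  have hlim : Tendsto (fun D : ℝ => (Real.log 2 - Real.log (-2 * D)) / q) atBot atBot := by
    apply Tendsto.atBot_div_const hq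
    apply tendsto_atBot_add_const_left
    apply (tendsto_neg_atTop_atBot).comp
    apply Real.tendsto_log_atTop.comp
    have : Tendsto (fun D : ℝ => -2 * D) atBot atTop := by
      have : Tendsto (fun x : ℝ => -x) atBot atTop := tendsto_neg_atBot_atTop
      have h2 := this.atTop_mul_const (show (0:ℝ) < 2 by norm_num)
      convert h2 using 2 with D
      ring
    exact this
  apply tendsto_atBot_mono' atBot ?_ hlim
  filter_upwards [eventually_lt_atBot (0 : ℝ)] with D hD
  rw [Phi]
  apply (div_le_div_iff_of_pos_right hq).2
  set S := Sfun g z ha D with hSdef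
  set u := Real.exp (-((g + z) * S)) with hudef
  have hupos : 0 < u := Real.exp_pos _
  have hSpos : 0 < S := Sfun_pos g z ha D
  have hSD : -D < S := by
    have := abs_lt_Sfun g z ha D
    have := neg_abs_le D
    calc -D = |D| := (abs_of_neg hD).symm
    _ < S := abs_lt_Sfun g z ha D
  have hsub : 0 < S - D := by linarith
  have hrel : 4 * u = S ^ 2 - D ^ 2 := Sfun_exp g z ha D
  have hfrac : (S + D) / 2 = 2 * u / (S - D) := by
    rw [div_eq_div_iff (by norm_num) hsub.ne']
    nlinarith
  have hloga : Real.log ((S + D) / 2) = Real.log 2 + Real.log u - Real.log (S - D) := by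
    rw [hfrac, Real.log_div (by positivity) hsub.ne', Real.log_mul (by norm_num) hupos.ne']
  have hlogu : Real.log u = -((g + z) * S) := Real.log_exp _
  have hmono : Real.log (-2 * D) ≤ Real.log (S - D) :=
    Real.log_le_log (by linarith) (by linarith)
  have h1 : (g + z) / 2 * S ≤ (g + z) * S := by nlinarith
  have h2 : (g - z) / 2 * D ≤ 0 := by
    have : 0 ≤ g - z := by linarith
    nlinarith
  rw [hloga, hlogu]
  linarith

lemma Phi_surjective (g z q : ℝ) (ha : 0 < g + z) (hg : 0 < g) (hz : 0 < z) (hzg : z ≤ g)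
    (hq : 0 < q) : Function.Surjective (Phi g z q ha) :=
  (Phi_continuous g z q ha hq).surjective (Phi_tendsto_atTop g z q ha hg hz hzg hq)
    (Phi_tendsto_atBot g z q ha hg hz hzg hq)

noncomputable def ePhi (g z q : ℝ) (ha : 0 < g + z) (hg : 0 < g) (hz : 0 < z) (hzg : z ≤ g)
    (hq : 0 < q) : ℝ ≃o ℝ :=
  StrictMono.orderIsoOfSurjective (Phi g z q ha) (Phi_strictMono g z q ha hg hz hzg hq)
    (Phi_surjective g z q ha hg hz hzg hq)



lemma Fa_nonneg (g z : ℝ) (ha : 0 < g + z) {S : ℝ} (hS : sigmaZ g z ≤ S) : 0 ≤ Fa g z S := by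
  have hσ := (sigma_spec g z ha).1
  have := (Fa_strictMonoOn g z ha).monotoneOn (mem_Ici.2 hσ.le)
    (mem_Ici.2 (le_trans hσ.le hS)) hS
  rw [Fa_sigma g z ha] at this
  exact this

lemma Sfun_sqrt (g z : ℝ) (ha : 0 < g + z) {S : ℝ} (hS : sigmaZ g z ≤ S) :
    Sfun g z ha (Real.sqrt (Fa g z S)) = S :=
  Sfun_of_Fa g z ha hS (Real.sq_sqrt (Fa_nonneg g z ha hS)).symm

lemma Sfun_neg_sqrt (g z : ℝ) (ha : 0 < g + z) {S : ℝ} (hS : sigmaZ g z ≤ S) :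
    Sfun g z ha (-Real.sqrt (Fa g z S)) = S := by
  apply Sfun_of_Fa g z ha hS
  rw [neg_pow]
  simp [Real.sq_sqrt (Fa_nonneg g z ha hS)]

lemma phiA_eq (g z q : ℝ) (ha : 0 < g + z) {S : ℝ} (hS : sigmaZ g z ≤ S) :
    phiA g z q S = Phi g z q ha (Real.sqrt (Fa g z S)) := by
  rw [Phi, Sfun_sqrt g z ha hS, phiA]
  simp only [Fa]

lemma phiB_eq (g z q : ℝ) (ha : 0 < g + z) {S : ℝ} (hS : sigmaZ g z ≤ S) :
    phiB g z q S = Phi g z q ha (-Real.sqrt (Fa g z S)) := by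
  rw [Phi, Sfun_neg_sqrt g z ha hS, phiB]
  simp only [Fa]
  rw [show S + -Real.sqrt (S ^ 2 - 4 * Real.exp (-((g + z) * S)))
      = S - Real.sqrt (S ^ 2 - 4 * Real.exp (-((g + z) * S))) from by ring]
  ring

end Stmt4Aux

open Stmt4Aux in
/-- for 0 < z ≤ g and q ≥ 1, φ_A is strictly increasing and φ_B strictly
decreasing on [Σ_z, ∞), both vanish at Σ_z, they map [Σ_z, ∞) bijectively onto [0,∞)
and (−∞,0] respectively; the single-valued inverse Σ(φ) exists on ℝ with range
[Σ_z, ∞) and Σ(0) = Σ_z, and the difference c₁ − c₂ as a function of φ is strictly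
monotone increasing with the stated positive derivative and tends to ±∞ as φ → ±∞. -/
theorem stmt_4 (g z q : ℝ) (hg : 0 < g) (hz : 0 < z) (hzg : z ≤ g) (hq : 1 ≤ q) :
    StrictMonoOn (phiA g z q) (Ici (sigmaZ g z)) ∧
    StrictAntiOn (phiB g z q) (Ici (sigmaZ g z)) ∧
    phiA g z q (sigmaZ g z) = 0 ∧ phiB g z q (sigmaZ g z) = 0 ∧
    BijOn (phiA g z q) (Ici (sigmaZ g z)) (Ici 0) ∧
    BijOn (phiB g z q) (Ici (sigmaZ g z)) (Iic 0) ∧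
    ∃ S : ℝ → ℝ,
      (∀ φ : ℝ, S φ ∈ Ici (sigmaZ g z)) ∧
      S 0 = sigmaZ g z ∧
      (∀ φ : ℝ, 0 ≤ φ → phiA g z q (S φ) = φ) ∧
      (∀ φ : ℝ, φ ≤ 0 → phiB g z q (S φ) = φ) ∧
      range S = Ici (sigmaZ g z) ∧
      ∀ D : ℝ → ℝ,
        (∀ φ : ℝ, 0 ≤ φ → D φ = Real.sqrt ((S φ) ^ 2 - 4 * Real.exp (-((g + z) * S φ)))) →
        (∀ φ : ℝ, φ ≤ 0 → D φ = -Real.sqrt ((S φ) ^ 2 - 4 * Real.exp (-((g + z) * S φ)))) →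
        StrictMono D ∧
        (∀ φ : ℝ,
          HasDerivAt D
            (q * (S φ * Real.exp ((g + z) * S φ) + 2 * (g + z)) /
              ((1 + g * S φ) * Real.exp ((g + z) * S φ) + g ^ 2 - z ^ 2)) φ ∧
          0 < q * (S φ * Real.exp ((g + z) * S φ) + 2 * (g + z)) /
              ((1 + g * S φ) * Real.exp ((g + z) * S φ) + g ^ 2 - z ^ 2)) ∧
        Tendsto D atTop atTop ∧ Tendsto D atBot atBot := by
  have ha : 0 < g + z := by linarith
  have hq0 : 0 < q := lt_of_lt_of_le one_pos hq
  have hz2 : z ^ 2 ≤ g ^ 2 := by nlinarith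
  have hσpos := (sigma_spec g z ha).1
  set σ := sigmaZ g z with hσdef
  have hPhiMono := Phi_strictMono g z q ha hg hz hzg hq0
  set E := ePhi g z q ha hg hz hzg hq0 with hEdef
  have hEapp : ∀ x : ℝ, E x = Phi g z q ha x := fun _ => rfl
  have hEsymm : ∀ y : ℝ, Phi g z q ha (E.symm y) = y := fun y => E.apply_symm_apply y
  have hEsymm0 : E.symm 0 = 0 := by
    rw [OrderIso.symm_apply_eq, hEapp, Phi_zero g z q ha]
  -- strict monotonicity of phiA
  have monoA : StrictMonoOn (phiA g z q) (Ici σ) := by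
    intro x hx y hy hxy
    rw [phiA_eq g z q ha (mem_Ici.1 hx), phiA_eq g z q ha (mem_Ici.1 hy)]
    apply hPhiMono
    exact Real.sqrt_lt_sqrt (Fa_nonneg g z ha (mem_Ici.1 hx))
      ((Fa_strictMonoOn g z ha) (mem_Ici.2 (le_trans hσpos.le (mem_Ici.1 hx)))
        (mem_Ici.2 (le_trans hσpos.le (mem_Ici.1 hy))) hxy)
  have antiB : StrictAntiOn (phiB g z q) (Ici σ) := by
    intro x hx y hy hxy
    rw [phiB_eq g z q ha (mem_Ici.1 hx), phiB_eq g z q ha (mem_Ici.1 hy)]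
    apply hPhiMono
    apply neg_lt_neg
    exact Real.sqrt_lt_sqrt (Fa_nonneg g z ha (mem_Ici.1 hx))
      ((Fa_strictMonoOn g z ha) (mem_Ici.2 (le_trans hσpos.le (mem_Ici.1 hx)))
        (mem_Ici.2 (le_trans hσpos.le (mem_Ici.1 hy))) hxy)
  have hA0 : phiA g z q σ = 0 := by
    rw [phiA_eq g z q ha le_rfl, Fa_sigma g z ha, Real.sqrt_zero, Phi_zero g z q ha]
  have hB0 : phiB g z q σ = 0 := by
    rw [phiB_eq g z q ha le_rfl, Fa_sigma g z ha, Real.sqrt_zero, neg_zero, Phi_zero g z q ha]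
  -- bijectivity of phiA
  have bijA : BijOn (phiA g z q) (Ici σ) (Ici 0) := by
    refine ⟨?_, monoA.injOn, ?_⟩
    · intro S hS
      rw [mem_Ici, phiA_eq g z q ha (mem_Ici.1 hS), ← Phi_zero g z q ha]
      exact hPhiMono.monotone (Real.sqrt_nonneg _)
    · intro y hy
      set Dv := E.symm y with hDvdef
      have hDv : Phi g z q ha Dv = y := hEsymm y
      have hDv0 : 0 ≤ Dv := by
        apply hPhiMono.le_iff_le.1
        rw [Phi_zero g z q ha, hDv]
        exact mem_Ici.1 hy
      refine ⟨Sfun g z ha Dv, mem_Ici.2 (Sfun_ge g z ha Dv), ?_⟩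
      rw [phiA_eq g z q ha (Sfun_ge g z ha Dv), Fa_Sfun g z ha Dv, Real.sqrt_sq_eq_abs,
        abs_of_nonneg hDv0, hDv]
  have bijB : BijOn (phiB g z q) (Ici σ) (Iic 0) := by
    refine ⟨?_, antiB.injOn, ?_⟩
    · intro S hS
      rw [mem_Iic, phiB_eq g z q ha (mem_Ici.1 hS), ← Phi_zero g z q ha]
      apply hPhiMono.monotone
      simp [Real.sqrt_nonneg]
    · intro y hy
      set Dv := E.symm y with hDvdef
      have hDv : Phi g z q ha Dv = y := hEsymm y
      have hDv0 : Dv ≤ 0 := by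
        apply hPhiMono.le_iff_le.1
        rw [Phi_zero g z q ha, hDv]
        exact mem_Iic.1 hy
      refine ⟨Sfun g z ha Dv, mem_Ici.2 (Sfun_ge g z ha Dv), ?_⟩
      rw [phiB_eq g z q ha (Sfun_ge g z ha Dv), Fa_Sfun g z ha Dv, Real.sqrt_sq_eq_abs,
        abs_of_nonpos hDv0, neg_neg, hDv]
  refine ⟨monoA, antiB, hA0, hB0, bijA, bijB, fun φ => Sfun g z ha (E.symm φ), ?_, ?_, ?_, ?_, ?_, ?_⟩
  · exact fun φ => mem_Ici.2 (Sfun_ge g z ha (E.symm φ))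
  · show Sfun g z ha (E.symm 0) = σ
    rw [hEsymm0, Sfun_zero g z ha]
  · intro φ hφ
    have hDv0 : 0 ≤ E.symm φ := by
      apply hPhiMono.le_iff_le.1
      rw [Phi_zero g z q ha, hEsymm φ]
      exact hφ
    rw [phiA_eq g z q ha (Sfun_ge g z ha (E.symm φ)), Fa_Sfun g z ha (E.symm φ),
      Real.sqrt_sq_eq_abs, abs_of_nonneg hDv0, hEsymm φ]
  · intro φ hφ
    have hDv0 : E.symm φ ≤ 0 := by
      apply hPhiMono.le_iff_le.1
      rw [Phi_zero g z q ha, hEsymm φ]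
      exact hφ
    rw [phiB_eq g z q ha (Sfun_ge g z ha (E.symm φ)), Fa_Sfun g z ha (E.symm φ),
      Real.sqrt_sq_eq_abs, abs_of_nonpos hDv0, neg_neg, hEsymm φ]
  · ext T
    constructor
    · rintro ⟨φ, rfl⟩
      exact mem_Ici.2 (Sfun_ge g z ha (E.symm φ))
    · intro hT
      refine ⟨E (Real.sqrt (Fa g z T)), ?_⟩
      show Sfun g z ha (E.symm (E (Real.sqrt (Fa g z T)))) = T
      rw [OrderIso.symm_apply_apply, Sfun_sqrt g z ha (mem_Ici.1 hT)]
  · intro Dfn hD1 hD2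
    have hDeq : Dfn = fun φ => E.symm φ := by
      funext φ
      rcases le_total 0 φ with hφ | hφ
      · have hDv0 : 0 ≤ E.symm φ := by
          apply hPhiMono.le_iff_le.1
          rw [Phi_zero g z q ha, hEsymm φ]
          exact hφ
        rw [hD1 φ hφ]
        show Real.sqrt (Fa g z (Sfun g z ha (E.symm φ))) = E.symm φ
        rw [Fa_Sfun g z ha, Real.sqrt_sq_eq_abs, abs_of_nonneg hDv0]
      · have hDv0 : E.symm φ ≤ 0 := by
          apply hPhiMono.le_iff_le.1
          rw [Phi_zero g z q ha, hEsymm φ]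
          exact hφ
        rw [hD2 φ hφ]
        show -Real.sqrt (Fa g z (Sfun g z ha (E.symm φ))) = E.symm φ
        rw [Fa_Sfun g z ha, Real.sqrt_sq_eq_abs, abs_of_nonpos hDv0, neg_neg]
    subst hDeq
    refine ⟨fun x y hxy => E.symm.strictMono hxy, ?_, ?_, ?_⟩
    · intro φ
      have hder : HasDerivAt (fun y => E.symm y) (Pder g z q ha (E.symm φ))⁻¹ φ := by
        apply HasDerivAt.of_local_left_inverse
          (E.symm.toHomeomorph.continuous.continuousAt)
          (hasDerivAt_Phi g z q ha hq0 (E.symm φ))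
          (Pder_pos g z q ha hg hz2 hq0 (E.symm φ)).ne'
        filter_upwards with y
        exact hEsymm y
      rw [Pder_inv g z q ha hg hz2 hq0 (E.symm φ)] at hder
      refine ⟨hder, ?_⟩
      rw [← Pder_inv g z q ha hg hz2 hq0 (E.symm φ)]
      exact inv_pos.2 (Pder_pos g z q ha hg hz2 hq0 (E.symm φ))
    · apply tendsto_atTop_atTop_of_monotone E.symm.monotone
      intro b
      exact ⟨E b, le_of_eq (E.symm_apply_apply b).symm⟩
    · apply tendsto_atBot_atBot_of_monotone E.symm.monotone
      intro b
      exact ⟨E b, le_of_eq (E.symm_apply_apply b)⟩
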